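/- Let P_{n,k}(x) = Σ x^{pmp_{\underline{1}32}(σ)} where the sum is over σ ∈ S_n whose last descent is at position k (i.e., σ_k > σ_{k+1} < σ_{k+2} < ... < σ_n). Then for 1 ≤ k ≤ n-1, P_{n,k}(x) = (k-1)x·P_{n-1,k-1}(x) + 1 + Σ_{ℓ=1}^{k} P_{n-1,ℓ}(x), with P_{n,0}(x) = P_{n,n}(x) = 0. -/

import Mathlib

set_option maxHeartbeats 1000000


/-- Number of positions that start an occurrence of 132 in `σ` (pmp of `\underline{1}32`). -/
noncomputable def pmpS132 {n : ℕ} (σ : Equiv.Perm (Fin n)) : ℕ :=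
  Nat.card {i : Fin n // ∃ j k : Fin n, i < j ∧ j < k ∧ σ i < σ k ∧ σ k < σ j}

/-- The last descent of `σ` is at position `k` (1-indexed):
`σ_k > σ_{k+1} < σ_{k+2} < ... < σ_n`. -/
def LastDescentAt {n : ℕ} (σ : Equiv.Perm (Fin n)) (k : ℕ) : Prop :=
  ∃ (h1 : 0 < k) (h2 : k < n),
    σ ⟨k, h2⟩ < σ ⟨k - 1, by omega⟩ ∧
    ∀ j : ℕ, k ≤ j → ∀ hj : j + 1 < n, σ ⟨j, by omega⟩ < σ ⟨j + 1, hj⟩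

open Classical in
/-- `P n k = Σ x^{pmp_{\underline{1}32}(σ)}` over `σ ∈ S_n` with last descent at position `k`. -/
noncomputable def P (n k : ℕ) : Polynomial ℕ :=
  ∑ σ : Equiv.Perm (Fin n), if LastDescentAt σ k then Polynomial.X ^ pmpS132 σ else 0

namespace Stmt10Aux

open Equiv Finset Polynomial

attribute [local instance] Classical.propDecidable

variable {m : ℕ}

lemma mk_eq {n a b : ℕ} (ha : a < n) (hb : b < n) (h : a = b) :
    (⟨a, ha⟩ : Fin n) = ⟨b, hb⟩ := by subst h; rfl

/-- Insert the value `0` at position `p`. -/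
def ins (p : Fin (m + 1)) (τ : Equiv.Perm (Fin m)) : Equiv.Perm (Fin (m + 1)) :=
  ((finSuccEquiv' p).trans (Equiv.optionCongr τ)).trans (finSuccEquiv' 0).symm

lemma ins_self (p : Fin (m + 1)) (τ : Equiv.Perm (Fin m)) : ins p τ p = 0 := by
  simp [ins, finSuccEquiv'_at, finSuccEquiv'_symm_none]

lemma ins_succAbove (p : Fin (m + 1)) (τ : Equiv.Perm (Fin m)) (i : Fin m) :
    ins p τ (p.succAbove i) = (τ i).succ := by
  simp [ins, finSuccEquiv'_succAbove, finSuccEquiv'_symm_some, Fin.zero_succAbove]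

lemma ins_apply_of_lt (p : Fin (m + 1)) (τ : Equiv.Perm (Fin m)) {j : ℕ}
    (hjm : j < m + 1) (h : j < p.val) :
    ins p τ ⟨j, hjm⟩ = (τ ⟨j, by omega⟩).succ := by
  have hjm' : j < m := by omega
  have e : p.succAbove ⟨j, hjm'⟩ = ⟨j, hjm⟩ := by
    rw [Fin.succAbove_of_castSucc_lt _ _ (by rw [Fin.lt_def]; exact h), Fin.castSucc_mk]
  rw [← e, ins_succAbove]

lemma ins_apply_of_gt (p : Fin (m + 1)) (τ : Equiv.Perm (Fin m)) {j : ℕ}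
    (hjm : j < m + 1) (h : p.val < j) :
    ins p τ ⟨j, hjm⟩ = (τ ⟨j - 1, by omega⟩).succ := by
  have hjm' : j - 1 < m := by omega
  have e : p.succAbove ⟨j - 1, hjm'⟩ = ⟨j, hjm⟩ := by
    rw [Fin.succAbove_of_le_castSucc _ _ (by
      rw [Fin.le_def, Fin.coe_castSucc]; exact (show p.val ≤ j - 1 by omega)), Fin.succ_mk]
    exact mk_eq _ _ (by omega)
  rw [← e, ins_succAbove]

lemma ins_apply_self (p : Fin (m + 1)) (τ : Equiv.Perm (Fin m)) (h : p.val < m + 1) :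
    ins p τ ⟨p.val, h⟩ = 0 := by
  have e : (⟨p.val, h⟩ : Fin (m + 1)) = p := rfl
  rw [e, ins_self]

lemma ins_bijective :
    Function.Bijective (fun pt : Fin (m + 1) × Equiv.Perm (Fin m) => ins pt.1 pt.2) := by
  rw [Fintype.bijective_iff_injective_and_card]
  constructor
  · rintro ⟨p₁, τ₁⟩ ⟨p₂, τ₂⟩ h
    simp only at h
    have hp : p₁ = p₂ := by
      have ha : ins p₂ τ₂ p₁ = 0 := by rw [← h]; exact ins_self p₁ τ₁
      exact (ins p₂ τ₂).injective (ha.trans (ins_self p₂ τ₂).symm)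
    subst hp
    have hτ : τ₁ = τ₂ := by
      refine Equiv.ext fun i => Fin.succ_injective _ ?_
      rw [← ins_succAbove p₁ τ₁ i, h, ins_succAbove]
    rw [hτ]
  · simp [Fintype.card_perm, Nat.factorial_succ]

/-- `τ` is increasing from (0-indexed) position `t` on. -/
def IncrFrom (τ : Equiv.Perm (Fin m)) (t : ℕ) : Prop :=
  ∀ j : ℕ, t ≤ j → ∀ hj : j + 1 < m, τ ⟨j, by omega⟩ < τ ⟨j + 1, hj⟩

/-- There is an inversion `(j, k)` with `t ≤ j < k`. -/
def Inv (τ : Equiv.Perm (Fin m)) (t : ℕ) : Prop :=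
  ∃ j k : Fin m, t ≤ j.val ∧ j < k ∧ τ k < τ j

lemma incr_chain {τ : Equiv.Perm (Fin m)} {t : ℕ} (h : IncrFrom τ t) :
    ∀ b a : ℕ, ∀ ha : t ≤ a, ∀ hab : a < b, ∀ hb : b < m, τ ⟨a, by omega⟩ < τ ⟨b, hb⟩ := by
  intro b
  induction b with
  | zero => intro a _ hab _; omega
  | succ b ih =>
    intro a ha hab hb
    rcases Nat.lt_or_ge a b with h' | h'
    · exact lt_trans (ih a ha h' (by omega)) (h b (by omega) hb)
    · have hab' : a = b := by omega
      subst hab'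
      exact h a ha hb

lemma not_inv_of_incr {τ : Equiv.Perm (Fin m)} {t : ℕ} (h : IncrFrom τ t) : ¬ Inv τ t := by
  rintro ⟨j, k, hj, hjk, hlt⟩
  have h2 := incr_chain h k.val j.val hj hjk k.isLt
  exact absurd hlt (by exact h2.asymm)

lemma incr_of_LD {τ : Equiv.Perm (Fin m)} {ℓ k : ℕ} (hlk : ℓ ≤ k)
    (hL : LastDescentAt τ ℓ) : IncrFrom τ k := by
  obtain ⟨_, _, _, hinc⟩ := hL
  exact fun j hj hjm => hinc j (le_trans hlk hj) hjm

lemma incr_mono {τ : Equiv.Perm (Fin m)} {t : ℕ} (h : IncrFrom τ 0) : IncrFrom τ t :=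
  fun j _ hjm => h j (Nat.zero_le j) hjm

lemma not_LD_of_incr0 {τ : Equiv.Perm (Fin m)} {ℓ : ℕ} (h : IncrFrom τ 0)
    (hL : LastDescentAt τ ℓ) : False := by
  obtain ⟨h1, h2, hdesc, _⟩ := hL
  have h3 : τ ⟨ℓ - 1, by omega⟩ < τ ⟨ℓ - 1 + 1, by omega⟩ := h (ℓ - 1) (Nat.zero_le _) (by omega)
  have h4 : τ ⟨ℓ - 1 + 1, by omega⟩ = τ ⟨ℓ, h2⟩ := by
    exact congrArg τ (mk_eq _ _ (by omega))
  rw [h4] at h3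
  exact absurd hdesc h3.asymm

lemma LD_unique {τ : Equiv.Perm (Fin m)} {a b : ℕ} (ha : LastDescentAt τ a)
    (hb : LastDescentAt τ b) : a = b := by
  by_contra hne
  obtain ⟨ha0, ham, had, hai⟩ := ha
  obtain ⟨hb0, hbm, hbd, hbi⟩ := hb
  rcases Nat.lt_or_ge a b with h | h
  · have hx : τ ⟨b - 1, by omega⟩ < τ ⟨b - 1 + 1, by omega⟩ := hai (b - 1) (by omega) (by omega)
    have h4 : τ ⟨b - 1 + 1, by omega⟩ = τ ⟨b, hbm⟩ := by
      exact congrArg τ (mk_eq _ _ (by omega))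
    rw [h4] at hx
    exact absurd hbd hx.asymm
  · have h' : b < a := by omega
    have hx : τ ⟨a - 1, by omega⟩ < τ ⟨a - 1 + 1, by omega⟩ := hbi (a - 1) (by omega) (by omega)
    have h4 : τ ⟨a - 1 + 1, by omega⟩ = τ ⟨a, ham⟩ := by
      exact congrArg τ (mk_eq _ _ (by omega))
    rw [h4] at hx
    exact absurd had hx.asymm

lemma LD_le {τ : Equiv.Perm (Fin m)} {k ℓ : ℕ} (h : IncrFrom τ k)
    (hL : LastDescentAt τ ℓ) : ℓ ≤ k := by
  by_contra hc
  obtain ⟨h1, h2, hdesc, _⟩ := hL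
  have h3 : τ ⟨ℓ - 1, by omega⟩ < τ ⟨ℓ - 1 + 1, by omega⟩ := h (ℓ - 1) (by omega) (by omega)
  have h4 : τ ⟨ℓ - 1 + 1, by omega⟩ = τ ⟨ℓ, h2⟩ := by
    exact congrArg τ (mk_eq _ _ (by omega))
  rw [h4] at h3
  exact absurd hdesc h3.asymm

lemma exists_LD (τ : Equiv.Perm (Fin m)) (h : ¬ IncrFrom τ 0) :
    ∃ ℓ, 1 ≤ ℓ ∧ LastDescentAt τ ℓ := by
  classical
  have hne : ∃ j, ∃ hj : j + 1 < m, ¬ τ ⟨j, by omega⟩ < τ ⟨j + 1, hj⟩ := by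
    by_contra hc
    push_neg at hc
    exact h fun j _ hj => hc j hj
  obtain ⟨j₀, hj₀m, hj₀⟩ := hne
  set D : ℕ → Prop := fun ℓ => ∃ (hℓ : ℓ < m) (h1 : 1 ≤ ℓ), τ ⟨ℓ, hℓ⟩ < τ ⟨ℓ - 1, by omega⟩
    with hD
  have hDj : D (j₀ + 1) := by
    refine ⟨hj₀m, by omega, ?_⟩
    have h1 : τ ⟨j₀ + 1 - 1, by omega⟩ = τ ⟨j₀, by omega⟩ := by
      exact congrArg τ (mk_eq _ _ (by omega))
    rw [h1]
    have hne' : τ ⟨j₀ + 1, hj₀m⟩ ≠ τ ⟨j₀, by omega⟩ := by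
      intro he
      have h2 := τ.injective he
      simp only [Fin.mk.injEq] at h2
      omega
    rcases lt_or_gt_of_ne hne' with h' | h'
    · exact h'
    · exact absurd h' hj₀
  have hge : j₀ + 1 ≤ Nat.findGreatest D (m - 1) := Nat.le_findGreatest (by omega) hDj
  have hDl : D (Nat.findGreatest D (m - 1)) :=
    Nat.findGreatest_spec (m := j₀ + 1) (by omega) hDj
  obtain ⟨hlm, hl1, hld⟩ := hDl
  refine ⟨Nat.findGreatest D (m - 1), hl1, hl1, hlm, hld, ?_⟩
  intro j hj hjm
  have hnd : ¬ D (j + 1) :=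
    Nat.findGreatest_is_greatest (Nat.lt_succ_of_le hj) (by omega)
  have hne' : τ ⟨j, by omega⟩ ≠ τ ⟨j + 1, hjm⟩ := by
    intro he
    have h2 := τ.injective he
    simp only [Fin.mk.injEq] at h2
    omega
  rcases lt_or_gt_of_ne hne' with h' | h'
  · exact h'
  · exfalso
    apply hnd
    refine ⟨hjm, by omega, ?_⟩
    have h1 : τ ⟨j + 1 - 1, by omega⟩ = τ ⟨j, by omega⟩ :=
      congrArg τ (mk_eq _ _ (by omega))
    rw [h1]
    exact h'

lemma incr0_eq_one {τ : Equiv.Perm (Fin m)} (h : IncrFrom τ 0) : τ = 1 := by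
  have hmono : StrictMono τ := by
    intro a b hab
    exact incr_chain h b.val a.val (Nat.zero_le _) hab b.isLt
  have hmono' : StrictMono ⇑τ⁻¹ := by
    intro a b hab
    rw [← hmono.lt_iff_lt]
    simpa using hab
  have hle : ∀ (g : Equiv.Perm (Fin m)), StrictMono ⇑g → ∀ i : Fin m, i ≤ g i := by
    intro g hg
    have hv : ∀ v : ℕ, ∀ hv : v < m, v ≤ (g ⟨v, hv⟩).val := by
      intro v
      induction v with
      | zero => intro hv; exact Nat.zero_le _
      | succ v ih =>
        intro hv
        have h1 : g ⟨v, by omega⟩ < g ⟨v + 1, hv⟩ := hg (Fin.mk_lt_mk.mpr (by omega))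
        have h2 := ih (by omega)
        have h3 := Fin.lt_def.mp h1
        omega
    intro i
    exact Fin.le_def.mpr (hv i.val i.isLt)
  refine Equiv.ext fun i => ?_
  have h1 : i ≤ τ i := hle τ hmono i
  have h2 : τ i ≤ i := by
    have h3 : τ i ≤ τ⁻¹ (τ i) := hle τ⁻¹ hmono' (τ i)
    rwa [Equiv.Perm.inv_def, Equiv.symm_apply_apply] at h3
  rw [Equiv.Perm.one_apply]
  exact le_antisymm h2 h1

lemma pmp_card {n : ℕ} (σ : Equiv.Perm (Fin n)) :
    pmpS132 σ =
      (Finset.univ.filter fun i : Fin n =>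
        ∃ j k : Fin n, i < j ∧ j < k ∧ σ i < σ k ∧ σ k < σ j).card := by
  rw [pmpS132, Nat.card_eq_fintype_card]
  exact Fintype.card_subtype _

lemma pmp_one : pmpS132 (1 : Equiv.Perm (Fin m)) = 0 := by
  rw [pmpS132]
  have : IsEmpty {i : Fin m // ∃ j k : Fin m, i < j ∧ j < k ∧
      (1 : Equiv.Perm (Fin m)) i < (1 : Equiv.Perm (Fin m)) k ∧
      (1 : Equiv.Perm (Fin m)) k < (1 : Equiv.Perm (Fin m)) j} := by
    constructor
    rintro ⟨i, j, k, hij, hjk, hx1, hx2⟩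
    simp only [Equiv.Perm.coe_one, id_eq] at hx1 hx2
    exact absurd hjk hx2.asymm
  exact Nat.card_of_isEmpty

lemma counted_succAbove (p : Fin (m + 1)) (τ : Equiv.Perm (Fin m)) (i : Fin m) :
    (∃ j k : Fin (m + 1), p.succAbove i < j ∧ j < k ∧
        ins p τ (p.succAbove i) < ins p τ k ∧ ins p τ k < ins p τ j) ↔
    (∃ j k : Fin m, i < j ∧ j < k ∧ τ i < τ k ∧ τ k < τ j) := by
  constructor
  · rintro ⟨j, k', h1, h2, h3, h4⟩
    have hk'p : k' ≠ p := by
      intro h; subst h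
      rw [ins_self] at h3
      exact absurd h3 (Fin.not_lt_zero _)
    have hjp : j ≠ p := by
      intro h; subst h
      rw [ins_self] at h4
      exact absurd h4 (Fin.not_lt_zero _)
    obtain ⟨j₀, rfl⟩ := Fin.exists_succAbove_eq hjp
    obtain ⟨k₀, rfl⟩ := Fin.exists_succAbove_eq hk'p
    simp only [ins_succAbove] at h3 h4
    exact ⟨j₀, k₀, Fin.succAbove_lt_succAbove_iff.mp h1,
      Fin.succAbove_lt_succAbove_iff.mp h2,
      Fin.succ_lt_succ_iff.mp h3, Fin.succ_lt_succ_iff.mp h4⟩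
  · rintro ⟨j₀, k₀, h1, h2, h3, h4⟩
    refine ⟨p.succAbove j₀, p.succAbove k₀, Fin.succAbove_lt_succAbove_iff.mpr h1,
      Fin.succAbove_lt_succAbove_iff.mpr h2, ?_, ?_⟩
    · simp only [ins_succAbove]
      exact Fin.succ_lt_succ_iff.mpr h3
    · simp only [ins_succAbove]
      exact Fin.succ_lt_succ_iff.mpr h4

lemma counted_self (p : Fin (m + 1)) (τ : Equiv.Perm (Fin m)) :
    (∃ j k : Fin (m + 1), p < j ∧ j < k ∧
        ins p τ p < ins p τ k ∧ ins p τ k < ins p τ j) ↔ Inv τ p.val := by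
  constructor
  · rintro ⟨j, k', h1, h2, h3, h4⟩
    have hk'p : k' ≠ p := by
      intro h; subst h
      exact absurd h3 (lt_irrefl _)
    have hjp : j ≠ p := (ne_of_gt h1)
    obtain ⟨j₀, rfl⟩ := Fin.exists_succAbove_eq hjp
    obtain ⟨k₀, rfl⟩ := Fin.exists_succAbove_eq hk'p
    simp only [ins_succAbove] at h4
    refine ⟨j₀, k₀, ?_, Fin.succAbove_lt_succAbove_iff.mp h2, Fin.succ_lt_succ_iff.mp h4⟩
    rcases Nat.lt_or_ge j₀.val p.val with h | h
    · exfalso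
      rw [Fin.succAbove_of_castSucc_lt _ _ (by
        rw [Fin.lt_def, Fin.coe_castSucc]; exact h)] at h1
      rw [Fin.lt_def, Fin.coe_castSucc] at h1
      omega
    · exact h
  · rintro ⟨j₀, k₀, hpj, hjk, hlt⟩
    refine ⟨p.succAbove j₀, p.succAbove k₀, ?_,
      Fin.succAbove_lt_succAbove_iff.mpr hjk, ?_, ?_⟩
    · rw [Fin.succAbove_of_le_castSucc _ _ (by rw [Fin.le_def, Fin.coe_castSucc]; exact hpj)]
      rw [Fin.lt_def, Fin.val_succ]
      omega
    · rw [ins_self, ins_succAbove]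
      exact Fin.succ_pos _
    · simp only [ins_succAbove]
      exact Fin.succ_lt_succ_iff.mpr hlt

lemma pmp_ins (p : Fin (m + 1)) (τ : Equiv.Perm (Fin m)) :
    pmpS132 (ins p τ) = pmpS132 τ + (if Inv τ p.val then 1 else 0) := by
  classical
  rw [pmp_card, pmp_card]
  have hset : (Finset.univ.filter fun i : Fin (m + 1) =>
        ∃ j k : Fin (m + 1), i < j ∧ j < k ∧ ins p τ i < ins p τ k ∧ ins p τ k < ins p τ j)
      = ((Finset.univ.filter fun i : Fin m =>
          ∃ j k : Fin m, i < j ∧ j < k ∧ τ i < τ k ∧ τ k < τ j).map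
            ⟨p.succAbove, Fin.succAbove_right_injective⟩)
        ∪ (if Inv τ p.val then {p} else ∅) := by
    ext x
    by_cases hxp : x = p
    · subst hxp
      simp only [mem_filter, mem_univ, true_and, mem_union, mem_map,
        Function.Embedding.coeFn_mk]
      rw [counted_self]
      constructor
      · intro h
        right
        rw [if_pos h]
        exact mem_singleton_self _
      · rintro (⟨a, _, hae⟩ | h)
        · exact absurd hae (Fin.succAbove_ne x a)
        · by_cases hinv : Inv τ x.val
          · exact hinv
          · rw [if_neg hinv] at h
            exact absurd h (notMem_empty _)
    · obtain ⟨i, rfl⟩ := Fin.exists_succAbove_eq hxp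
      simp only [mem_filter, mem_univ, true_and, mem_union, mem_map,
        Function.Embedding.coeFn_mk]
      rw [counted_succAbove]
      constructor
      · intro h
        exact Or.inl ⟨i, by simpa using h, rfl⟩
      · rintro (⟨a, ha, hae⟩ | h)
        · have hai : a = i := Fin.succAbove_right_injective hae
          subst hai
          simpa using ha
        · exfalso
          by_cases hinv : Inv τ p.val
          · rw [if_pos hinv, mem_singleton] at h
            exact hxp h
          · rw [if_neg hinv] at h
            exact notMem_empty _ h
  rw [hset, card_union_of_disjoint, card_map]
  · congr 1
    split_ifs <;> simp
  · rw [Finset.disjoint_left]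
    rintro x hx hx'
    obtain ⟨a, _, rfl⟩ := mem_map.mp hx
    by_cases hinv : Inv τ p.val
    · rw [if_pos hinv, mem_singleton] at hx'
      exact Fin.succAbove_ne p a hx'
    · rw [if_neg hinv] at hx'
      exact notMem_empty _ hx'

lemma LD_ins_iff {k : ℕ} (hk1 : 1 ≤ k) (hk2 : k ≤ m) (p : Fin (m + 1))
    (τ : Equiv.Perm (Fin m)) :
    LastDescentAt (ins p τ) k ↔
      (p.val + 2 ≤ k ∧ LastDescentAt τ (k - 1)) ∨ (p.val = k ∧ IncrFrom τ k) := by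
  constructor
  · rintro ⟨hk0, hkn, hdesc, hinc⟩
    have hple : p.val ≤ k := by
      by_contra hc
      push_neg at hc
      have hx : ins p τ ⟨p.val - 1, by omega⟩ < ins p τ ⟨p.val - 1 + 1, by omega⟩ :=
        hinc (p.val - 1) (by omega) (by omega)
      have h2 : ins p τ ⟨p.val - 1 + 1, by omega⟩ = 0 := by
        have e : (⟨p.val - 1 + 1, by omega⟩ : Fin (m + 1)) = ⟨p.val, p.isLt⟩ :=
          mk_eq _ _ (by omega)
        rw [e, ins_apply_self]
      rw [h2] at hx
      exact absurd hx (Fin.not_lt_zero _)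
    have hpne : p.val ≠ k - 1 := by
      intro hc
      have h2 : ins p τ ⟨k - 1, by omega⟩ = 0 := by
        have e : (⟨k - 1, by omega⟩ : Fin (m + 1)) = ⟨p.val, p.isLt⟩ := mk_eq _ _ (by omega)
        rw [e, ins_apply_self]
      rw [h2] at hdesc
      exact absurd hdesc (Fin.not_lt_zero _)
    rcases Nat.lt_or_ge p.val k with hplt | hpge
    · have hp2 : p.val + 2 ≤ k := by omega
      left
      refine ⟨hp2, by omega, by omega, ?_, ?_⟩
      · rw [ins_apply_of_gt p τ (j := k) hkn (by omega),
          ins_apply_of_gt p τ (j := k - 1) (show k - 1 < m + 1 by omega) (by omega)] at hdesc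
        have hy := Fin.succ_lt_succ_iff.mp hdesc
        convert hy using 3 <;> omega
      · intro j hj hjm
        have hx : ins p τ ⟨j + 1, by omega⟩ < ins p τ ⟨j + 1 + 1, by omega⟩ :=
          hinc (j + 1) (by omega) (by omega)
        rw [ins_apply_of_gt p τ (j := j + 1) (by omega) (by omega),
          ins_apply_of_gt p τ (j := j + 1 + 1) (by omega) (by omega)] at hx
        have hy := Fin.succ_lt_succ_iff.mp hx
        convert hy using 3 <;> omega
    · have hpk : p.val = k := by omega
      right
      refine ⟨hpk, ?_⟩
      intro j hj hjm
      have hx : ins p τ ⟨j + 1, by omega⟩ < ins p τ ⟨j + 1 + 1, by omega⟩ :=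
        hinc (j + 1) (by omega) (by omega)
      rw [ins_apply_of_gt p τ (j := j + 1) (by omega) (by omega),
        ins_apply_of_gt p τ (j := j + 1 + 1) (by omega) (by omega)] at hx
      have hy := Fin.succ_lt_succ_iff.mp hx
      convert hy using 3 <;> omega
  · rintro (⟨hp2, h0, h1', hdesc, hinc⟩ | ⟨hpk, hincf⟩)
    · refine ⟨by omega, by omega, ?_, ?_⟩
      · rw [ins_apply_of_gt p τ (j := k) (by omega) (by omega),
          ins_apply_of_gt p τ (j := k - 1) (by omega) (by omega), Fin.succ_lt_succ_iff]
        convert hdesc using 3 <;> omega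
      · intro j hj hjm
        rw [ins_apply_of_gt p τ (j := j) (by omega) (by omega),
          ins_apply_of_gt p τ (j := j + 1) (by omega) (by omega), Fin.succ_lt_succ_iff]
        have hy := hinc (j - 1) (by omega) (by omega)
        convert hy using 3 <;> omega
    · have hkm1 : k < m + 1 := by omega
      refine ⟨by omega, hkm1, ?_, ?_⟩
      · have h2 : ins p τ ⟨k, hkm1⟩ = 0 := by
          have e : (⟨k, hkm1⟩ : Fin (m + 1)) = ⟨p.val, p.isLt⟩ := mk_eq _ _ (by omega)
          rw [e, ins_apply_self]
        rw [h2, ins_apply_of_lt p τ (j := k - 1) (by omega) (by omega)]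
        exact Fin.succ_pos _
      · intro j hj hjm
        rcases Nat.eq_or_lt_of_le hj with hje | hjgt
        · have h2 : ins p τ ⟨j, by omega⟩ = 0 := by
            have e : (⟨j, by omega⟩ : Fin (m + 1)) = ⟨p.val, p.isLt⟩ := mk_eq _ _ (by omega)
            rw [e, ins_apply_self]
          rw [h2, ins_apply_of_gt p τ (j := j + 1) (by omega) (by omega)]
          exact Fin.succ_pos _
        · rw [ins_apply_of_gt p τ (j := j) (by omega) (by omega),
            ins_apply_of_gt p τ (j := j + 1) (by omega) (by omega), Fin.succ_lt_succ_iff]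
          have hy := hincf (j - 1) (by omega) (by omega)
          convert hy using 3 <;> omega

lemma pmp_ins_left {k : ℕ} {p : Fin (m + 1)} {τ : Equiv.Perm (Fin m)}
    (hpk : p.val + 2 ≤ k) (hLD : LastDescentAt τ (k - 1)) :
    pmpS132 (ins p τ) = pmpS132 τ + 1 := by
  obtain ⟨h0, h1', hdesc, _⟩ := hLD
  have hInv : Inv τ p.val := by
    refine ⟨⟨k - 2, by omega⟩, ⟨k - 1, by omega⟩, (show p.val ≤ k - 2 by omega),
      Fin.mk_lt_mk.mpr (by omega), ?_⟩
    convert hdesc using 3 <;> omega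
  rw [pmp_ins, if_pos hInv]

lemma pmp_ins_valley {k : ℕ} {p : Fin (m + 1)} {τ : Equiv.Perm (Fin m)}
    (hpk : p.val = k) (hI : IncrFrom τ k) : pmpS132 (ins p τ) = pmpS132 τ := by
  have hni : ¬ Inv τ p.val := by
    rw [hpk]
    exact not_inv_of_incr hI
  rw [pmp_ins, if_neg hni, add_zero]

end Stmt10Aux

open Stmt10Aux Finset Polynomial in
theorem stmt10 (n k : ℕ) (h1 : 1 ≤ k) (h2 : k ≤ n - 1) :
    (∀ m, P m 0 = 0) ∧ (∀ m, P m m = 0) ∧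
    P n k = (k - 1) • (Polynomial.X * P (n - 1) (k - 1)) + 1 +
      ∑ ℓ ∈ Finset.Icc 1 k, P (n - 1) ℓ := by
  classical
  have hP0 : ∀ m, P m 0 = 0 := by
    intro M
    simp only [P]
    refine Finset.sum_eq_zero fun σ _ => if_neg ?_
    rintro ⟨h, -⟩
    exact absurd h (lt_irrefl 0)
  have hPmm : ∀ m, P m m = 0 := by
    intro M
    simp only [P]
    refine Finset.sum_eq_zero fun σ _ => if_neg ?_
    rintro ⟨-, h, -⟩
    exact absurd h (lt_irrefl M)
  refine ⟨hP0, hPmm, ?_⟩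
  obtain ⟨m, rfl⟩ : ∃ m, n = m + 1 := ⟨n - 1, by omega⟩
  have hkm : k ≤ m := by omega
  have key : (∑ σ : Equiv.Perm (Fin (m + 1)),
        if LastDescentAt σ k then (X : Polynomial ℕ) ^ pmpS132 σ else 0)
      = (k - 1) • (X * P m (k - 1)) + (1 + ∑ ℓ ∈ Finset.Icc 1 k, P m ℓ) := by
    rw [← Fintype.sum_bijective (fun pt : Fin (m + 1) × Equiv.Perm (Fin m) => ins pt.1 pt.2)
      ins_bijective
      (fun pt => if LastDescentAt (ins pt.1 pt.2) k then (X : Polynomial ℕ) ^ pmpS132 (ins pt.1 pt.2) else 0)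
      (fun σ => if LastDescentAt σ k then (X : Polynomial ℕ) ^ pmpS132 σ else 0)
      (fun pt => rfl)]
    rw [Fintype.sum_prod_type]
    have hsummand : ∀ (p : Fin (m + 1)) (τ : Equiv.Perm (Fin m)),
        (if LastDescentAt (ins p τ) k then (X : Polynomial ℕ) ^ pmpS132 (ins p τ) else 0)
        = (if p.val + 2 ≤ k then
            (if LastDescentAt τ (k - 1) then (X : Polynomial ℕ) ^ (pmpS132 τ + 1) else 0)
            else 0)
          + (if p.val = k then
              (if IncrFrom τ k then (X : Polynomial ℕ) ^ pmpS132 τ else 0) else 0) := by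
      intro p τ
      by_cases hA : p.val + 2 ≤ k ∧ LastDescentAt τ (k - 1)
      · obtain ⟨hA1, hA2⟩ := hA
        rw [if_pos ((LD_ins_iff h1 hkm p τ).mpr (Or.inl ⟨hA1, hA2⟩)), if_pos hA1, if_pos hA2,
          if_neg (show ¬ p.val = k by omega), pmp_ins_left hA1 hA2, add_zero]
      · by_cases hB : p.val = k ∧ IncrFrom τ k
        · obtain ⟨hB1, hB2⟩ := hB
          rw [if_pos ((LD_ins_iff h1 hkm p τ).mpr (Or.inr ⟨hB1, hB2⟩)),
            pmp_ins_valley hB1 hB2, if_neg (show ¬ p.val + 2 ≤ k by omega),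
            if_pos hB1, if_pos hB2, zero_add]
        · rw [if_neg (fun hc => by
            rcases (LD_ins_iff h1 hkm p τ).mp hc with h | h
            · exact hA h
            · exact hB h)]
          have e1 : (if p.val + 2 ≤ k then
              (if LastDescentAt τ (k - 1) then (X : Polynomial ℕ) ^ (pmpS132 τ + 1) else 0)
              else 0) = 0 := by
            split_ifs with hp hL
            · exact absurd ⟨hp, hL⟩ hA
            · rfl
            · rfl
          have e2 : (if p.val = k then
              (if IncrFrom τ k then (X : Polynomial ℕ) ^ pmpS132 τ else 0) else 0) = 0 := by
            split_ifs with hp hL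
            · exact absurd ⟨hp, hL⟩ hB
            · rfl
            · rfl
          rw [e1, e2, add_zero]
    calc (∑ p : Fin (m + 1), ∑ τ : Equiv.Perm (Fin m),
            if LastDescentAt (ins p τ) k then (X : Polynomial ℕ) ^ pmpS132 (ins p τ) else 0)
        = (∑ p : Fin (m + 1), ∑ τ : Equiv.Perm (Fin m),
            ((if p.val + 2 ≤ k then
              (if LastDescentAt τ (k - 1) then (X : Polynomial ℕ) ^ (pmpS132 τ + 1) else 0)
              else 0)
            + (if p.val = k then
                (if IncrFrom τ k then (X : Polynomial ℕ) ^ pmpS132 τ else 0) else 0))) :=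
          Finset.sum_congr rfl fun p _ => Finset.sum_congr rfl fun τ _ => hsummand p τ
      _ = (∑ p : Fin (m + 1), (if p.val + 2 ≤ k then
              (∑ τ : Equiv.Perm (Fin m), if LastDescentAt τ (k - 1) then
                (X : Polynomial ℕ) ^ (pmpS132 τ + 1) else 0) else 0))
          + (∑ p : Fin (m + 1), (if p.val = k then
              (∑ τ : Equiv.Perm (Fin m), if IncrFrom τ k then
                (X : Polynomial ℕ) ^ pmpS132 τ else 0) else 0)) := by
          rw [← Finset.sum_add_distrib]
          refine Finset.sum_congr rfl fun p _ => ?_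
          rw [Finset.sum_add_distrib]
          congr 1
          · split_ifs <;> simp
          · split_ifs <;> simp
      _ = (k - 1) • (X * P m (k - 1)) + (1 + ∑ ℓ ∈ Finset.Icc 1 k, P m ℓ) := by
          congr 1
          · -- first family
            have hcard : (Finset.univ.filter fun p : Fin (m + 1) => p.val + 2 ≤ k).card
                = k - 1 := by
              have e : (Finset.univ.filter fun p : Fin (m + 1) => p.val + 2 ≤ k)
                  = Finset.map (Fin.castLEEmb (show k - 1 ≤ m + 1 by omega)) Finset.univ := by
                ext x
                simp only [Finset.mem_filter, Finset.mem_univ, true_and, Finset.mem_map]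
                constructor
                · intro hx
                  refine ⟨⟨x.val, by omega⟩, ?_⟩
                  apply Fin.val_injective
                  simp
                · rintro ⟨y, -, rfl⟩
                  have hy := y.isLt
                  simp only [Fin.castLEEmb_apply, Fin.coe_castLE]
                  omega
              rw [e, Finset.card_map, Finset.card_univ, Fintype.card_fin]
            have hC : (∑ τ : Equiv.Perm (Fin m),
                if LastDescentAt τ (k - 1) then (X : Polynomial ℕ) ^ (pmpS132 τ + 1) else 0)
                = X * P m (k - 1) := by
              simp only [P, Finset.mul_sum]
              refine Finset.sum_congr rfl fun τ _ => ?_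
              split_ifs
              · rw [pow_succ, mul_comm]
              · rw [mul_zero]
            rw [← Finset.sum_filter, Finset.sum_const, hcard, hC]
          · -- second family
            rw [Finset.sum_eq_single (⟨k, by omega⟩ : Fin (m + 1))
              (fun p _ hne => if_neg fun hc => hne (Fin.val_injective hc))
              (fun habs => absurd (Finset.mem_univ _) habs), if_pos rfl]
            have dec : ∀ τ : Equiv.Perm (Fin m),
                (if IncrFrom τ k then (X : Polynomial ℕ) ^ pmpS132 τ else 0)
                = (if IncrFrom τ 0 then (X : Polynomial ℕ) ^ pmpS132 τ else 0)
                  + ∑ ℓ ∈ Finset.Icc 1 k,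
                      (if LastDescentAt τ ℓ then (X : Polynomial ℕ) ^ pmpS132 τ else 0) := by
              intro τ
              by_cases hIk : IncrFrom τ k
              · by_cases h0 : IncrFrom τ 0
                · rw [if_pos hIk, if_pos h0, Finset.sum_eq_zero, add_zero]
                  intro ℓ _
                  exact if_neg fun hL => not_LD_of_incr0 h0 hL
                · obtain ⟨ℓ₀, hℓ1, hL₀⟩ := exists_LD τ h0
                  have hℓk : ℓ₀ ≤ k := LD_le hIk hL₀
                  rw [if_pos hIk, if_neg h0, zero_add,
                    Finset.sum_eq_single ℓ₀
                      (fun ℓ _ hne => if_neg fun hL => hne (LD_unique hL hL₀))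
                      (fun habs => absurd (Finset.mem_Icc.mpr ⟨hℓ1, hℓk⟩) habs),
                    if_pos hL₀]
              · rw [if_neg hIk, if_neg (fun h0 => hIk (incr_mono h0)), zero_add,
                  Finset.sum_eq_zero]
                intro ℓ hmem
                exact if_neg fun hL => hIk (incr_of_LD (Finset.mem_Icc.mp hmem).2 hL)
            rw [Finset.sum_congr rfl fun τ _ => dec τ, Finset.sum_add_distrib]
            congr 1
            · rw [Finset.sum_eq_single (1 : Equiv.Perm (Fin m))]
              · have hinc1 : IncrFrom (1 : Equiv.Perm (Fin m)) 0 := by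
                  intro j _ hj
                  simp only [Equiv.Perm.one_apply]
                  exact Fin.mk_lt_mk.mpr (by omega)
                rw [if_pos hinc1, pmp_one, pow_zero]
              · intro τ _ hne
                exact if_neg fun h => hne (incr0_eq_one h)
              · intro habs
                exact absurd (Finset.mem_univ _) habs
            · rw [Finset.sum_comm]
              refine Finset.sum_congr rfl fun ℓ _ => ?_
              simp only [P]
  have hQ : P (m + 1) k = ∑ σ : Equiv.Perm (Fin (m + 1)),
      if LastDescentAt σ k then (X : Polynomial ℕ) ^ pmpS132 σ else 0 := rfl
  simp only [Nat.add_sub_cancel]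
  exact hQ.trans (key.trans (add_assoc _ 1 _).symm)
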